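/- arXiv:1502.05666 — 2 statements merged into one kernel-verified Lean document; each statement's English description precedes it below -/
import Mathlib

section
/- Let 0 ≤ μ < L < ∞, let I be a finite index set, and let (x_i, g_i, f_i) for i ∈ I be triples with x_i, g_i ∈ ℝ^d and f_i ∈ ℝ. Then the set {(x_i, g_i, f_i)}_{i∈I} is F_{μ,L}-interpolable if and only if the set {(x_i, g_i − μ x_i, f_i − (μ/2)‖x_i‖²)}_{i∈I} is F_{0,L−μ}-interpolable. -/
open scoped RealInnerProductSpace

/-- `f : ℝ^d → ℝ` belongs to the class `F_{μ,L}` (for finite `L`): it is differentiable,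
its gradient is `L`-Lipschitz, and `f - (μ/2)‖·‖²` is convex. -/
def SmoothStronglyConvex {d : ℕ} (μ L : ℝ) (f : EuclideanSpace ℝ (Fin d) → ℝ) : Prop :=
  Differentiable ℝ f ∧
  (∀ x y, ‖gradient f x - gradient f y‖ ≤ L * ‖x - y‖) ∧
  ConvexOn ℝ Set.univ (fun x => f x - μ / 2 * ‖x‖ ^ 2)

/-- The set of triples `(x i, g i, f i)` is `F_{μ,L}`-interpolable. -/
def Interpolable {d : ℕ} {ι : Type*} (μ L : ℝ)
    (x g : ι → EuclideanSpace ℝ (Fin d)) (fv : ι → ℝ) : Prop :=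
  ∃ f : EuclideanSpace ℝ (Fin d) → ℝ, SmoothStronglyConvex μ L f ∧
    ∀ i, f (x i) = fv i ∧ gradient f (x i) = g i

section Helpers

variable {E : Type*} [NormedAddCommGroup E] [InnerProductSpace ℝ E] [CompleteSpace E]

lemma hasGradientAt_half_sq (c : ℝ) (x : E) :
    HasGradientAt (fun y : E => c / 2 * ‖y‖ ^ 2) (c • x) x := by
  rw [hasGradientAt_iff_hasFDerivAt]
  have h1 : HasFDerivAt (fun y : E => ⟪y, y⟫)
      ((fderivInnerCLM ℝ (x, x)).comp ((ContinuousLinearMap.id ℝ E).prod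
        (ContinuousLinearMap.id ℝ E))) x :=
    (hasFDerivAt_id x).inner ℝ (hasFDerivAt_id x)
  have h2 := h1.const_mul (c / 2)
  have heq : (fun y : E => c / 2 * ⟪y, y⟫) = (fun y : E => c / 2 * ‖y‖ ^ 2) := by
    funext y; rw [real_inner_self_eq_norm_sq]
  rw [heq] at h2
  refine h2.congr_fderiv ?_
  ext v
  simp [InnerProductSpace.toDual_apply_apply, fderivInnerCLM_apply, real_inner_smul_left,
    real_inner_comm x v]
  ring

lemma hasDerivAt_line (ψ : E → ℝ) (hd : Differentiable ℝ ψ) (x v : E) (t : ℝ) :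
    HasDerivAt (fun s : ℝ => ψ (x + s • v)) ⟪gradient ψ (x + t • v), v⟫ t := by
  have hline : HasDerivAt (fun s : ℝ => x + s • v) v t := by
    simpa using ((hasDerivAt_id t).smul_const v).const_add x
  have hψ : HasFDerivAt ψ (InnerProductSpace.toDual ℝ E (gradient ψ (x + t • v))) (x + t • v) :=
    hasGradientAt_iff_hasFDerivAt.1 (hd _).hasGradientAt
  have := hψ.comp_hasDerivAt t hline
  rw [InnerProductSpace.toDual_apply_apply] at this
  exact this

lemma subgrad_ineq (ψ : E → ℝ) (hd : Differentiable ℝ ψ) (hc : ConvexOn ℝ Set.univ ψ)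
    (x y : E) : ψ x + ⟪gradient ψ x, y - x⟫ ≤ ψ y := by
  set v := y - x with hv
  set g : ℝ → ℝ := fun s => ψ (x + s • v) with hg
  have hgc : ConvexOn ℝ Set.univ g := by
    have := hc.comp_affineMap (AffineMap.lineMap (x : E) (y : E))
    have h2 : (ψ ∘ (AffineMap.lineMap (x : E) (y : E))) = g := by
      funext s
      simp [g, AffineMap.lineMap_apply, v]
      congr 1
      abel
    rw [h2] at this
    simpa using this
  have hder : HasDerivAt g ⟪gradient ψ x, v⟫ 0 := by
    have := hasDerivAt_line ψ hd x v 0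
    simpa using this
  have hslope := hgc.le_slope_of_hasDerivAt (Set.mem_univ (0:ℝ)) (Set.mem_univ (1:ℝ))
    one_pos hder
  have h01 : slope g 0 1 = g 1 - g 0 := by simp [slope_def_field]
  have hg0 : g 0 = ψ x := by simp [g]
  have hg1 : g 1 = ψ y := by simp [g, v]
  rw [h01, hg0, hg1] at hslope
  linarith

lemma convexOn_of_monotone_gradient (ψ : E → ℝ) (hd : Differentiable ℝ ψ)
    (hm : ∀ a b : E, 0 ≤ ⟪gradient ψ a - gradient ψ b, a - b⟫) :
    ConvexOn ℝ Set.univ ψ := by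
  refine ⟨convex_univ, ?_⟩
  intro p _ q _ a b ha hb hab
  set v := q - p with hv
  set g : ℝ → ℝ := fun s => ψ (p + s • v) with hgdef
  have hdg : Differentiable ℝ g := fun t => ((hasDerivAt_line ψ hd p v t).differentiableAt)
  have hderiv : ∀ t : ℝ, deriv g t = ⟪gradient ψ (p + t • v), v⟫ := fun t =>
    (hasDerivAt_line ψ hd p v t).deriv
  have hmono : Monotone (deriv g) := by
    intro s t hst
    rw [hderiv, hderiv]
    rcases eq_or_lt_of_le hst with rfl | hlt
    · exact le_rfl
    · have := hm (p + t • v) (p + s • v)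
      have hdiff : (p + t • v) - (p + s • v) = (t - s) • v := by
        rw [add_sub_add_left_eq_sub, ← sub_smul]
      rw [hdiff, real_inner_smul_right, inner_sub_left] at this
      have hts : 0 < t - s := by linarith
      nlinarith [this]
  have hgc : ConvexOn ℝ Set.univ g := hmono.convexOn_univ_of_deriv hdg
  have key := hgc.2 (Set.mem_univ (0:ℝ)) (Set.mem_univ (1:ℝ)) ha hb hab
  have h1 : a • (0:ℝ) + b • (1:ℝ) = b := by simp
  rw [h1] at key
  have hg0 : g 0 = ψ p := by simp [g]
  have hg1 : g 1 = ψ q := by simp [g, v]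
  have hgb : g b = ψ (a • p + b • q) := by
    simp only [g]
    congr 1
    have : a = 1 - b := by linarith
    rw [this]
    simp [v, smul_sub, sub_smul]
    abel
  rw [hg0, hg1, hgb] at key
  simpa [smul_eq_mul] using key

lemma hasGradientAt_sub_half_sq (f : E → ℝ) (hf : Differentiable ℝ f) (μ : ℝ) (x : E) :
    HasGradientAt (fun y : E => f y - μ / 2 * ‖y‖ ^ 2) (gradient f x - μ • x) x := by
  rw [hasGradientAt_iff_hasFDerivAt]
  have h1 : HasFDerivAt f (InnerProductSpace.toDual ℝ E (gradient f x)) x :=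
    hasGradientAt_iff_hasFDerivAt.1 (hf x).hasGradientAt
  have h2 : HasFDerivAt (fun y : E => μ / 2 * ‖y‖ ^ 2)
      (InnerProductSpace.toDual ℝ E (μ • x)) x :=
    hasGradientAt_iff_hasFDerivAt.1 (hasGradientAt_half_sq μ x)
  have := h1.sub h2
  rwa [← map_sub] at this

lemma gradient_sub_half_sq (f : E → ℝ) (hf : Differentiable ℝ f) (μ : ℝ) (x : E) :
    gradient (fun y : E => f y - μ / 2 * ‖y‖ ^ 2) x = gradient f x - μ • x :=
  (hasGradientAt_sub_half_sq f hf μ x).gradient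

lemma lipschitz_grad_of_sandwich {K : ℝ} (hK : 0 < K) (φ : E → ℝ)
    (hd : Differentiable ℝ φ) (hc : ConvexOn ℝ Set.univ φ)
    (hub : ∀ a b : E, ⟪gradient φ a - gradient φ b, a - b⟫ ≤ K * ‖a - b‖ ^ 2) :
    ∀ p q : E, ‖gradient φ p - gradient φ q‖ ≤ K * ‖p - q‖ := by
  set G := gradient φ with hG
  -- ψ = K/2‖·‖² - φ is convex
  set ψ : E → ℝ := fun z => φ z - K / 2 * ‖z‖ ^ 2 with hψdef
  have hψd : Differentiable ℝ ψ := fun z =>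
    ((hasGradientAt_sub_half_sq φ hd K z).differentiableAt)
  have hψgrad : ∀ z, gradient ψ z = G z - K • z := fun z =>
    gradient_sub_half_sq φ hd K z
  have hψconc : ConvexOn ℝ Set.univ (fun z => -ψ z) := by
    apply convexOn_of_monotone_gradient
    · exact hψd.neg
    · intro a b
      have hg : ∀ z, gradient (fun z => -ψ z) z = -(G z - K • z) := by
        intro z
        have : HasGradientAt ψ (G z - K • z) z := by
          rw [← hψgrad z]; exact (hψd z).hasGradientAt
        have hneg : HasGradientAt (fun z => -ψ z) (-(G z - K • z)) z := by
          rw [hasGradientAt_iff_hasFDerivAt] at this ⊢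
          rw [map_neg]
          exact this.neg
        exact hneg.gradient
      rw [hg, hg]
      have := hub a b
      have hin : ⟪-(G a - K • a) - -(G b - K • b), a - b⟫
          = K * ‖a - b‖ ^ 2 - ⟪G a - G b, a - b⟫ := by
        have : -(G a - K • a) - -(G b - K • b) = K • (a - b) - (G a - G b) := by
          rw [smul_sub]; abel
        rw [this, inner_sub_left, real_inner_smul_left, real_inner_self_eq_norm_sq]
      rw [hin]
      linarith
  -- descent lemma : φ w ≤ φ u + ⟪G u, w - u⟫ + K/2 ‖w-u‖²
  have descent : ∀ u w : E, φ w ≤ φ u + ⟪G u, w - u⟫ + K / 2 * ‖w - u‖ ^ 2 := by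
    intro u w
    have := subgrad_ineq (fun z => -ψ z) hψd.neg hψconc u w
    have hg : ∀ z, gradient (fun z => -ψ z) z = -(G z - K • z) := by
      intro z
      have h1 : HasGradientAt ψ (G z - K • z) z := by
        rw [← hψgrad z]; exact (hψd z).hasGradientAt
      have hneg : HasGradientAt (fun z => -ψ z) (-(G z - K • z)) z := by
        rw [hasGradientAt_iff_hasFDerivAt] at h1 ⊢
        rw [map_neg]; exact h1.neg
      exact hneg.gradient
    rw [hg] at this
    simp only [ψ] at this
    have hinner : ⟪-(G u - K • u), w - u⟫ = K * ⟪u, w - u⟫ - ⟪G u, w - u⟫ := by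
      rw [inner_neg_left, inner_sub_left, real_inner_smul_left]; ring
    rw [hinner] at this
    have hnorm : ‖w - u‖ ^ 2 = ‖w‖ ^ 2 - 2 * ⟪u, w⟫ + ‖u‖ ^ 2 := by
      rw [← real_inner_self_eq_norm_sq, ← real_inner_self_eq_norm_sq,
        ← real_inner_self_eq_norm_sq, inner_sub_left, inner_sub_right, inner_sub_right,
        real_inner_comm u w]
      ring
    have hiu : ⟪u, w - u⟫ = ⟪u, w⟫ - ‖u‖ ^ 2 := by
      rw [inner_sub_right, real_inner_self_eq_norm_sq]
    rw [hiu] at this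
    nlinarith [this]
  -- subgradient of φ
  have subg : ∀ u w : E, φ u + ⟪G u, w - u⟫ ≤ φ w := fun u w =>
    subgrad_ineq φ hd hc u w
  -- cocoercivity
  have coco : ∀ p q : E, ‖G p - G q‖ ^ 2 ≤ K * ⟪G p - G q, p - q⟫ := by
    have half : ∀ p q : E, φ p + ⟪G p, q - p⟫ + (2 * K)⁻¹ * ‖G q - G p‖ ^ 2 ≤ φ q := by
      intro p q
      set z : E := q - K⁻¹ • (G q - G p) with hz
      have h1 := descent q z
      have h2 := subg p z
      have hzq : z - q = -(K⁻¹ • (G q - G p)) := by rw [hz]; abel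
      have e1 : ⟪G q, z - q⟫ = -(K⁻¹ * ⟪G q, G q - G p⟫) := by
        rw [hzq, inner_neg_right, real_inner_smul_right]
      have e2 : ‖z - q‖ ^ 2 = K⁻¹ ^ 2 * ‖G q - G p‖ ^ 2 := by
        rw [hzq, norm_neg, norm_smul, Real.norm_eq_abs, abs_inv, abs_of_pos hK, mul_pow]
      have e3 : ⟪G p, z - p⟫ = ⟪G p, q - p⟫ - K⁻¹ * ⟪G p, G q - G p⟫ := by
        have : z - p = (q - p) - K⁻¹ • (G q - G p) := by rw [hz]; abel
        rw [this, inner_sub_right, real_inner_smul_right]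
      rw [e1, e2] at h1
      rw [e3] at h2
      have e4 : ⟪G q, G q - G p⟫ - ⟪G p, G q - G p⟫ = ‖G q - G p‖ ^ 2 := by
        rw [← inner_sub_left, real_inner_self_eq_norm_sq]
      have hKinv : 0 < K⁻¹ := inv_pos.2 hK
      have expand : K / 2 * (K⁻¹ ^ 2 * ‖G q - G p‖ ^ 2) = (2 * K)⁻¹ * ‖G q - G p‖ ^ 2 := by
        field_simp
      have e4' : K⁻¹ * ⟪G q, G q - G p⟫ - K⁻¹ * ⟪G p, G q - G p⟫
          = K⁻¹ * ‖G q - G p‖ ^ 2 := by rw [← mul_sub, e4]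
      have h5 : K⁻¹ * ‖G q - G p‖ ^ 2 = 2 * ((2 * K)⁻¹ * ‖G q - G p‖ ^ 2) := by
        field_simp
      linarith [h1, h2, e4', h5, expand]
    intro p q
    have hpq := half p q
    have hqp := half q p
    have : ⟪G p, q - p⟫ + ⟪G q, p - q⟫ + (2 * K)⁻¹ * ‖G q - G p‖ ^ 2
        + (2 * K)⁻¹ * ‖G p - G q‖ ^ 2 ≤ 0 := by linarith
    have hs : ‖G q - G p‖ = ‖G p - G q‖ := by rw [← norm_neg]; congr 1; abel
    have hi : ⟪G p, q - p⟫ + ⟪G q, p - q⟫ = -⟪G p - G q, p - q⟫ := by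
      rw [inner_sub_left]
      have : ⟪G p, q - p⟫ = -⟪G p, p - q⟫ := by
        rw [← inner_neg_right]; congr 1; abel
      rw [this]; ring
    rw [hs, hi] at this
    have h5 : K⁻¹ * ‖G p - G q‖ ^ 2 = 2 * ((2 * K)⁻¹ * ‖G p - G q‖ ^ 2) := by
      field_simp
    have h6 : K⁻¹ * ‖G p - G q‖ ^ 2 ≤ ⟪G p - G q, p - q⟫ := by linarith
    have h7 := mul_le_mul_of_nonneg_left h6 hK.le
    rw [← mul_assoc, mul_inv_cancel₀ hK.ne', one_mul] at h7
    exact h7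
  intro p q
  have h := coco p q
  have hCS : ⟪G p - G q, p - q⟫ ≤ ‖G p - G q‖ * ‖p - q‖ := real_inner_le_norm _ _
  rcases eq_or_lt_of_le (norm_nonneg (G p - G q)) with h0 | h0
  · rw [← h0]; positivity
  · have : ‖G p - G q‖ ^ 2 ≤ K * (‖G p - G q‖ * ‖p - q‖) := by
      calc ‖G p - G q‖ ^ 2 ≤ K * ⟪G p - G q, p - q⟫ := h
        _ ≤ K * (‖G p - G q‖ * ‖p - q‖) := by
            exact mul_le_mul_of_nonneg_left hCS (le_of_lt hK)
    rw [pow_two] at this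
    nlinarith [this, h0]

end Helpers

/-- Lemma 1 of the paper (minimal curvature subtraction, finite `L`):
`{(x_i, g_i, f_i)}` is `F_{μ,L}`-interpolable iff
`{(x_i, g_i - μ x_i, f_i - (μ/2)‖x_i‖²)}` is `F_{0,L-μ}`-interpolable. -/
theorem interpolable_iff_curvature_subtraction {d : ℕ} {ι : Type*} [Fintype ι]
    (μ L : ℝ) (hμ : 0 ≤ μ) (hμL : μ < L)
    (x g : ι → EuclideanSpace ℝ (Fin d)) (fv : ι → ℝ) :
    Interpolable μ L x g fv ↔
      Interpolable 0 (L - μ) x (fun i => g i - μ • x i)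
        (fun i => fv i - μ / 2 * ‖x i‖ ^ 2) := by
  constructor
  · rintro ⟨f, ⟨hdf, hlip, hconv⟩, hval⟩
    set φ : EuclideanSpace ℝ (Fin d) → ℝ := fun z => f z - μ / 2 * ‖z‖ ^ 2 with hφ
    have hdφ : Differentiable ℝ φ := fun z =>
      (hasGradientAt_sub_half_sq f hdf μ z).differentiableAt
    have hgrad : ∀ z, gradient φ z = gradient f z - μ • z := fun z =>
      gradient_sub_half_sq f hdf μ z
    have hub : ∀ a b, ⟪gradient φ a - gradient φ b, a - b⟫ ≤ (L - μ) * ‖a - b‖ ^ 2 := by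
      intro a b
      rw [hgrad a, hgrad b]
      have heq : (gradient f a - μ • a) - (gradient f b - μ • b)
          = (gradient f a - gradient f b) - μ • (a - b) := by rw [smul_sub]; abel
      rw [heq, inner_sub_left, real_inner_smul_left, real_inner_self_eq_norm_sq]
      have hCS : ⟪gradient f a - gradient f b, a - b⟫
          ≤ ‖gradient f a - gradient f b‖ * ‖a - b‖ := real_inner_le_norm _ _
      have hl := hlip a b
      nlinarith [norm_nonneg (a - b), norm_nonneg (gradient f a - gradient f b)]
    refine ⟨φ, ⟨hdφ, ?_, ?_⟩, ?_⟩
    · exact lipschitz_grad_of_sandwich (by linarith) φ hdφ hconv hub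
    · simpa [hφ] using hconv
    · intro i
      obtain ⟨h1, h2⟩ := hval i
      refine ⟨by simp [hφ, h1], ?_⟩
      rw [hgrad (x i), h2]
  · rintro ⟨φ, ⟨hdφ, hlip, hconv⟩, hval⟩
    set f : EuclideanSpace ℝ (Fin d) → ℝ := fun z => φ z - (-μ) / 2 * ‖z‖ ^ 2 with hf
    have hdf : Differentiable ℝ f := fun z =>
      (hasGradientAt_sub_half_sq φ hdφ (-μ) z).differentiableAt
    have hgrad : ∀ z, gradient f z = gradient φ z + μ • z := by
      intro z
      rw [gradient_sub_half_sq φ hdφ (-μ) z, neg_smul, sub_neg_eq_add]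
    refine ⟨f, ⟨hdf, ?_, ?_⟩, ?_⟩
    · intro a b
      rw [hgrad a, hgrad b]
      have heq : (gradient φ a + μ • a) - (gradient φ b + μ • b)
          = (gradient φ a - gradient φ b) + μ • (a - b) := by rw [smul_sub]; abel
      rw [heq]
      calc ‖(gradient φ a - gradient φ b) + μ • (a - b)‖
          ≤ ‖gradient φ a - gradient φ b‖ + ‖μ • (a - b)‖ := norm_add_le _ _
        _ ≤ (L - μ) * ‖a - b‖ + μ * ‖a - b‖ := by
            have := hlip a b
            rw [norm_smul, Real.norm_eq_abs, abs_of_nonneg hμ]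
            linarith
        _ = L * ‖a - b‖ := by ring
    · have heq : (fun z => f z - μ / 2 * ‖z‖ ^ 2) = φ := by
        funext z; simp [hf]; ring
      rw [heq]
      simpa using hconv
    · intro i
      obtain ⟨h1, h2⟩ := hval i
      constructor
      · simp only [hf]
        rw [h1]; ring
      · rw [hgrad (x i), h2]
        rw [sub_add_cancel]
end

section
/- Let 0 ≤ μ < L < ∞ and let f : ℝ^d → ℝ be differentiable, with ∇f L-Lipschitz and with x ↦ f(x) − (μ/2)‖x‖² convex. Then for all x, y ∈ ℝ^d: f(x) − f(y) − ⟨∇f(y), x − y⟩ ≥ (1/(2(1 − μ/L))) · ( (1/L)‖∇f(x) − ∇f(y)‖² + μ‖x − y‖² − (2μ/L)⟨∇f(y) − ∇f(x), y − x⟩ ). -/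
open scoped RealInnerProductSpace

section Aux

variable {E : Type*} [NormedAddCommGroup E] [InnerProductSpace ℝ E] [CompleteSpace E]

/-- Derivative of a differentiable function along a line, in terms of the gradient. -/
lemma line_hasDerivAt {f : E → ℝ} (hdiff : Differentiable ℝ f) (x v : E) (t : ℝ) :
    HasDerivAt (fun s : ℝ => f (x + s • v)) ⟪gradient f (x + t • v), v⟫ t := by
  have hline : HasDerivAt (fun s : ℝ => x + s • v) v t := by
    simpa using ((hasDerivAt_id t).smul_const v).const_add x
  have hg := (hdiff (x + t • v)).hasGradientAt
  have h2 := hg.hasFDerivAt.comp_hasDerivAt t hline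
  simpa [InnerProductSpace.toDual_apply_apply, Function.comp_def] using h2

/-- Descent lemma: a function with `L`-Lipschitz gradient satisfies the quadratic upper bound. -/
lemma descent_lemma {f : E → ℝ} {L : ℝ} (hdiff : Differentiable ℝ f)
    (hlip : ∀ x y, ‖gradient f x - gradient f y‖ ≤ L * ‖x - y‖) (x y : E) :
    f x ≤ f y + ⟪gradient f y, x - y⟫ + L / 2 * ‖x - y‖ ^ 2 := by
  set v := x - y with hv
  set q : ℝ → ℝ := fun t => L * ‖v‖ ^ 2 / 2 * t ^ 2 - f (y + t • v) with hqdef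
  have hq : ∀ t : ℝ, HasDerivAt q (L * ‖v‖ ^ 2 * t - ⟪gradient f (y + t • v), v⟫) t := by
    intro t
    have h1 : HasDerivAt (fun t : ℝ => L * ‖v‖ ^ 2 / 2 * t ^ 2) (L * ‖v‖ ^ 2 * t) t := by
      have := (hasDerivAt_pow 2 t).const_mul (L * ‖v‖ ^ 2 / 2)
      convert this using 1
      all_goals first | rfl | ring
    exact h1.sub (line_hasDerivAt hdiff y v t)
  have hqd : Differentiable ℝ q := fun t => (hq t).differentiableAt
  have hderiv : ∀ t : ℝ, deriv q t = L * ‖v‖ ^ 2 * t - ⟪gradient f (y + t • v), v⟫ :=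
    fun t => (hq t).deriv
  have hmono : Monotone (deriv q) := by
    intro s t hst
    rw [hderiv, hderiv]
    have key : ⟪gradient f (y + t • v) - gradient f (y + s • v), v⟫ ≤ L * ‖v‖ ^ 2 * (t - s) := by
      calc ⟪gradient f (y + t • v) - gradient f (y + s • v), v⟫
          ≤ ‖gradient f (y + t • v) - gradient f (y + s • v)‖ * ‖v‖ := real_inner_le_norm _ _
        _ ≤ L * ‖(y + t • v) - (y + s • v)‖ * ‖v‖ :=
            mul_le_mul_of_nonneg_right (hlip _ _) (norm_nonneg _)
        _ = L * ‖v‖ ^ 2 * (t - s) := by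
            have : (y + t • v) - (y + s • v) = (t - s) • v := by
              rw [sub_smul]; abel
            rw [this, norm_smul, Real.norm_eq_abs, abs_of_nonneg (by linarith)]
            ring
    have := inner_sub_left (𝕜 := ℝ) (gradient f (y + t • v)) (gradient f (y + s • v)) v
    rw [this] at key
    nlinarith [key]
  have hconv : ConvexOn ℝ Set.univ q := hmono.convexOn_univ_of_deriv hqd
  have hslope := hconv.le_slope_of_hasDerivAt (Set.mem_univ 0) (Set.mem_univ 1)
    (by norm_num) (hq 0)
  have hq0 : q 0 = - f y := by simp [hqdef]
  have hq1 : q 1 = L * ‖v‖ ^ 2 / 2 - f x := by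
    have h1 : y + (1 : ℝ) • v = x := by simp [hv]
    rw [hqdef]
    simp only [h1]
    ring
  have hs : slope q 0 1 = q 1 - q 0 := by simp [slope_def_field]
  rw [hs, hq0, hq1] at hslope
  have h0 : L * ‖v‖ ^ 2 * 0 - ⟪gradient f (y + (0:ℝ) • v), v⟫ = - ⟪gradient f y, v⟫ := by
    simp
  rw [h0] at hslope
  linarith [hslope]

/-- First-order condition for a `μ`-strongly convex differentiable function. -/
lemma first_order {f : E → ℝ} {μ : ℝ} (hdiff : Differentiable ℝ f)
    (hsc : ConvexOn ℝ Set.univ (fun z => f z - μ / 2 * ‖z‖ ^ 2)) (x z : E) :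
    f x - μ / 2 * ‖x‖ ^ 2 + (⟪gradient f x, z - x⟫ - μ * ⟪x, z - x⟫)
      ≤ f z - μ / 2 * ‖z‖ ^ 2 := by
  set v := z - x with hv
  set φ : ℝ → ℝ := fun t => f (x + t • v) - μ / 2 * ‖x + t • v‖ ^ 2 with hφdef
  have hconv : ConvexOn ℝ Set.univ φ := by
    have hA := hsc.comp_affineMap (AffineMap.lineMap x z : ℝ →ᵃ[ℝ] E)
    rw [Set.preimage_univ] at hA
    have heq : ((fun w => f w - μ / 2 * ‖w‖ ^ 2) ∘ (AffineMap.lineMap x z : ℝ →ᵃ[ℝ] E)) = φ := by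
      funext t
      have harg : (AffineMap.lineMap x z : ℝ →ᵃ[ℝ] E) t = x + t • v := by
        rw [AffineMap.lineMap_apply]
        simp [hv]
        abel
      simp only [Function.comp_apply, harg, hφdef]
    rwa [heq] at hA
  have hpoly : (fun t : ℝ => μ / 2 * ‖x + t • v‖ ^ 2)
      = fun t => μ / 2 * ‖x‖ ^ 2 + t * (μ * ⟪x, v⟫) + t ^ 2 * (μ / 2 * ‖v‖ ^ 2) := by
    funext t
    have h2 : ⟪x, t • v⟫ = t * ⟪x, v⟫ := real_inner_smul_right x v t
    have h3 : ‖t • v‖ ^ 2 = t ^ 2 * ‖v‖ ^ 2 := by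
      rw [norm_smul, mul_pow, Real.norm_eq_abs, sq_abs]
    rw [norm_add_sq_real, h2, h3]
    ring
  have hn : HasDerivAt (fun t : ℝ => μ / 2 * ‖x + t • v‖ ^ 2) (μ * ⟪x, v⟫) 0 := by
    rw [hpoly]
    have ha : HasDerivAt (fun t : ℝ => μ / 2 * ‖x‖ ^ 2 + t * (μ * ⟪x, v⟫))
        (μ * ⟪x, v⟫) 0 := by
      simpa using ((hasDerivAt_id (0:ℝ)).mul_const (μ * ⟪x, v⟫)).const_add (μ / 2 * ‖x‖ ^ 2)
    have hb : HasDerivAt (fun t : ℝ => t ^ 2 * (μ / 2 * ‖v‖ ^ 2)) 0 0 := by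
      simpa using (hasDerivAt_pow 2 (0:ℝ)).mul_const (μ / 2 * ‖v‖ ^ 2)
    simpa [Pi.add_def] using ha.add hb
  have hφ0 : HasDerivAt φ (⟪gradient f x, v⟫ - μ * ⟪x, v⟫) 0 := by
    have h := (line_hasDerivAt hdiff x v 0).sub hn
    have h0 : x + (0:ℝ) • v = x := by simp
    rw [hφdef]
    simpa [h0, Pi.sub_def] using h
  have hslope := hconv.le_slope_of_hasDerivAt (Set.mem_univ 0) (Set.mem_univ 1)
    (by norm_num) hφ0
  have hs : slope φ 0 1 = φ 1 - φ 0 := by simp [slope_def_field]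
  have hφ0v : φ 0 = f x - μ / 2 * ‖x‖ ^ 2 := by simp [hφdef]
  have hφ1v : φ 1 = f z - μ / 2 * ‖z‖ ^ 2 := by
    have h1 : x + (1:ℝ) • v = z := by simp [hv]
    rw [hφdef]
    simp only [h1]
  rw [hs, hφ0v, hφ1v] at hslope
  linarith [hslope]

end Aux

/-- Necessity direction of Theorem 4 of the paper, applied pointwise on the whole domain:
any `L`-smooth `μ`-strongly convex function satisfies the interpolation inequality at
every pair of points. -/
theorem smooth_strongly_convex_inequality {d : ℕ} (μ L : ℝ) (hμ : 0 ≤ μ) (hμL : μ < L)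
    (f : EuclideanSpace ℝ (Fin d) → ℝ)
    (hdiff : Differentiable ℝ f)
    (hlip : ∀ x y, ‖gradient f x - gradient f y‖ ≤ L * ‖x - y‖)
    (hsc : ConvexOn ℝ Set.univ (fun x => f x - μ / 2 * ‖x‖ ^ 2)) :
    ∀ x y, f x - f y - ⟪gradient f y, x - y⟫ ≥
      1 / (2 * (1 - μ / L)) *
        (1 / L * ‖gradient f x - gradient f y‖ ^ 2 + μ * ‖x - y‖ ^ 2
          - 2 * (μ / L) * ⟪gradient f y - gradient f x, y - x⟫) := by
  intro x y
  have hL0 : (0:ℝ) < L := lt_of_le_of_lt hμ hμL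
  have hc : (0:ℝ) < L - μ := by linarith
  set Gx := gradient f x with hGx
  set Gy := gradient f y with hGy
  set s := x - y with hs
  set a := Gx - Gy with ha
  have hcne : L - μ ≠ 0 := ne_of_gt hc
  set u := a - μ • s with hu
  set w := x - (L - μ)⁻¹ • u with hw
  clear_value Gx Gy s a u w
  -- the two fundamental inequalities
  have hB := descent_lemma hdiff hlip w x
  have hA := first_order hdiff hsc y w
  rw [← hGx] at hB
  rw [← hGy] at hA
  -- vector identities
  have e1 : w - x = -((L - μ)⁻¹ • u) := by rw [hw]; abel
  have e2 : w - y = s - (L - μ)⁻¹ • u := by rw [hw, hs]; abel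
  have e3 : ‖w - x‖ ^ 2 = (L - μ)⁻¹ ^ 2 * ‖u‖ ^ 2 := by
    rw [e1, norm_neg, norm_smul, mul_pow, Real.norm_eq_abs, sq_abs]
  have e4a : ⟪Gx, w - x⟫ = -((L - μ)⁻¹ * ⟪Gx, u⟫) := by
    rw [e1, inner_neg_right, real_inner_smul_right]
  have e4b : ⟪Gy, w - y⟫ = ⟪Gy, s⟫ - (L - μ)⁻¹ * ⟪Gy, u⟫ := by
    rw [e2, inner_sub_right, real_inner_smul_right]
  have e4c : ⟪y, w - y⟫ = ⟪y, s⟫ - (L - μ)⁻¹ * ⟪y, u⟫ := by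
    rw [e2, inner_sub_right, real_inner_smul_right]
  have e4d : ⟪x, w - x⟫ = -((L - μ)⁻¹ * ⟪x, u⟫) := by
    rw [e1, inner_neg_right, real_inner_smul_right]
  have hw2 : ‖w‖ ^ 2 = ‖x‖ ^ 2 + 2 * ⟪x, w - x⟫ + ‖w - x‖ ^ 2 := by
    have hwx : x + (w - x) = w := by abel
    have := norm_add_sq_real x (w - x)
    rw [hwx] at this
    exact this
  have e5 : ⟪Gx, u⟫ - μ * ⟪x, u⟫ - ⟪Gy, u⟫ + μ * ⟪y, u⟫ = ‖u‖ ^ 2 := by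
    have hv : (Gx - μ • x) - (Gy - μ • y) = u := by
      rw [hu, ha, hs, smul_sub]; abel
    have hexp : ⟪(Gx - μ • x) - (Gy - μ • y), u⟫
        = ⟪Gx, u⟫ - μ * ⟪x, u⟫ - ⟪Gy, u⟫ + μ * ⟪y, u⟫ := by
      rw [inner_sub_left, inner_sub_left, inner_sub_left, real_inner_smul_left,
        real_inner_smul_left]
      ring
    rw [hv] at hexp
    rw [← hexp, real_inner_self_eq_norm_sq]
  have e6 : ‖u‖ ^ 2 = ‖a‖ ^ 2 - 2 * μ * ⟪a, s⟫ + μ ^ 2 * ‖s‖ ^ 2 := by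
    rw [hu, norm_sub_sq_real, real_inner_smul_right, norm_smul, mul_pow,
      Real.norm_eq_abs, sq_abs]
    ring
  have e7 : ‖x‖ ^ 2 = ‖y‖ ^ 2 + 2 * ⟪y, s⟫ + ‖s‖ ^ 2 := by
    have hwx : y + s = x := by rw [hs]; abel
    have := norm_add_sq_real y s
    rw [hwx] at this
    exact this
  have eQ : ⟪Gy - Gx, y - x⟫ = ⟪a, s⟫ := by
    have h1 : Gy - Gx = -a := by rw [ha]; abel
    have h2 : y - x = -s := by rw [hs]; abel
    rw [h1, h2, inner_neg_neg]
  -- scaled versions of identities, for linarith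
  have e4cμ : μ * ⟪y, w - y⟫ = μ * (⟪y, s⟫ - (L - μ)⁻¹ * ⟪y, u⟫) := by rw [e4c]
  have hw2μ : μ * ‖w‖ ^ 2 = μ * (‖x‖ ^ 2 + 2 * (-((L - μ)⁻¹ * ⟪x, u⟫)) + (L - μ)⁻¹ ^ 2 * ‖u‖ ^ 2) := by
    rw [hw2, e4d, e3]
  have e3L : L * ‖w - x‖ ^ 2 = L * ((L - μ)⁻¹ ^ 2 * ‖u‖ ^ 2) := by rw [e3]
  have he5c : (L - μ)⁻¹ * (⟪Gx, u⟫ - μ * ⟪x, u⟫ - ⟪Gy, u⟫ + μ * ⟪y, u⟫) = (L - μ)⁻¹ * ‖u‖ ^ 2 := by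
    rw [e5]
  have hident : L * ((L - μ)⁻¹ ^ 2 * ‖u‖ ^ 2) - μ * ((L - μ)⁻¹ ^ 2 * ‖u‖ ^ 2)
      = (L - μ)⁻¹ * ‖u‖ ^ 2 := by
    linear_combination ((L - μ)⁻¹ * ‖u‖ ^ 2) * mul_inv_cancel₀ hcne
  have hkey : f x - μ / 2 * ‖x‖ ^ 2 - (f y - μ / 2 * ‖y‖ ^ 2) - ⟪Gy, s⟫ + μ * ⟪y, s⟫
      ≥ (L - μ)⁻¹ / 2 * ‖u‖ ^ 2 := by
    linarith [hA, hB, e4a, e4b, e4cμ, hw2μ, e3L, he5c, hident]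
  have he6c : (L - μ)⁻¹ * ‖u‖ ^ 2 = (L - μ)⁻¹ * (‖a‖ ^ 2 - 2 * μ * ⟪a, s⟫ + μ ^ 2 * ‖s‖ ^ 2) := by rw [e6]
  have he7μ : μ * ‖x‖ ^ 2 = μ * (‖y‖ ^ 2 + 2 * ⟪y, s⟫ + ‖s‖ ^ 2) := by rw [e7]
  have hrhs : 1 / (2 * (1 - μ / L)) *
        (1 / L * ‖a‖ ^ 2 + μ * ‖s‖ ^ 2 - 2 * (μ / L) * ⟪a, s⟫)
      = (L - μ)⁻¹ / 2 * (‖a‖ ^ 2 - 2 * μ * ⟪a, s⟫ + μ ^ 2 * ‖s‖ ^ 2) + μ / 2 * ‖s‖ ^ 2 := by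
    have h1 : (1:ℝ) - μ / L = (L - μ) / L := by field_simp
    rw [h1]
    field_simp
    ring
  rw [ge_iff_le, eQ, hrhs]
  linarith [hkey, he6c, he7μ]
end
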